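/- The case AD = BC·q^{m(w)}: let w = e_{u_1v_1}⋯e_{u_kv_k} be an admissible word and m(w) := 1 + #{h : u_h v_h ≠ AD}. In the field of fractions of ℚ[A,B,C,D,q]/(A − q^N D) (for fixed N ≥ 0), under the additional specialization AD = BC·q^{m(w)}, the q-shifted parameters satisfy AD/τ(u_j)^{[j]} = u_j^{(j)} and AD/τ(v_j)^{[j]} = v_j^{(j)} for all 1 ≤ j ≤ k, where u^{(j)} are the shifts A^{(j)} = Aq^{#{h≤j: u_hv_h∈{BC,BD,CD}}}, B^{(j)} = Bq^{#{h≤j: u_hv_h∉{AC,AD}} + #{h≥j: u_hv_h=CD}}, C^{(j)} = Cq^{#{h≤j: u_hv_h∉{AB,AD}} + #{h≥j: u_hv_h=BD}}, D^{(j)} = Dq^{−#{h≥j: u_hv_h∈{AB,AC,BC}}}, and the bracketed shifts are A^{[j]} = Aq^{#{h≥j: u_hv_h∈{AB,AC,BC}}}, B^{[j]} = Bq^{#{h≥j: u_hv_h∉{AD,BD}} + #{h≤j: u_hv_h=AB}}, C^{[j]} = Cq^{#{h≥j: u_hv_h∉{AD,CD}} + #{h≤j: u_hv_h=AC}}, D^{[j]}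 = Dq^{−#{h≤j: u_hv_h∈{BC,BD,CD}}}. Consequently L_q(w) = L_q(τ(w)). -/

import Mathlib

/-- The six formal letters `e_{AB}, e_{AC}, e_{AD}, e_{BC}, e_{BD}, e_{CD}`. -/
inductive Letter : Type
  | AB | AC | AD | BC | BD | CD
  deriving DecidableEq

/-- The four marked points, as formal symbols. -/
inductive Pt : Type
  | A | B | C | D
  deriving DecidableEq

/-- First coordinate of a letter. -/
def Letter.p1 : Letter → Pt
  | .AB => .A | .AC => .A | .AD => .A | .BC => .B | .BD => .B | .CD => .C

/-- Second coordinate of a letter. -/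
def Letter.p2 : Letter → Pt
  | .AB => .B | .AC => .C | .AD => .D | .BC => .C | .BD => .D | .CD => .D

/-- The involution `σ = (A D)(B C)`. -/
def Pt.sigma : Pt → Pt
  | .A => .D | .B => .C | .C => .B | .D => .A

/-- The letter `e_{σ(v)σ(u)}` obtained from `e_{uv}`. -/
def Letter.dual : Letter → Letter
  | .AB => .CD | .AC => .BD | .AD => .AD | .BC => .BC | .BD => .AC | .CD => .AB

/-- The anti-automorphism `τ` on words: reverse the word and dualize each letter. -/
def tauWord (w : List Letter) : List Letter := (w.map Letter.dual).reverse

/-- A word is admissible if it does not begin with a letter `e_{Av}` and does not end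
with a letter `e_{uD}`. -/
def AdmissibleWord (w : List Letter) : Prop :=
  (∀ u ∈ w.head?, u ∉ [Letter.AB, Letter.AC, Letter.AD]) ∧
  (∀ u ∈ w.getLast?, u ∉ [Letter.AD, Letter.BD, Letter.CD])

/-- `m(w) = 1 + #{h : u_h v_h ≠ AD}`. -/
def mval (w : List Letter) : ℕ := 1 + w.countP (fun u => !(u == Letter.AD))

section

variable {K : Type*} [Field K] (A B C D q : K)

/-- The `q`-shifted parameter `p^{(j)}` (`j` is 1-based, `1 ≤ j ≤ k`):
`A^{(j)} = A q^{#{h≤j : u_h∈{BC,BD,CD}}}`,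
`B^{(j)} = B q^{#{h≤j : u_h∉{AC,AD}} + #{h≥j : u_h=CD}}`,
`C^{(j)} = C q^{#{h≤j : u_h∉{AB,AD}} + #{h≥j : u_h=BD}}`,
`D^{(j)} = D q^{−#{h≥j : u_h∈{AB,AC,BC}}}`. -/
def pshift (w : List Letter) (j : ℕ) : Pt → K
  | .A => A * q ^ ((w.take j).countP
      (fun u => u == Letter.BC || u == Letter.BD || u == Letter.CD))
  | .B => B * q ^ ((w.take j).countP (fun u => !(u == Letter.AC || u == Letter.AD))
      + (w.drop (j - 1)).countP (fun u => u == Letter.CD))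
  | .C => C * q ^ ((w.take j).countP (fun u => !(u == Letter.AB || u == Letter.AD))
      + (w.drop (j - 1)).countP (fun u => u == Letter.BD))
  | .D => D * q ^ (-(((w.drop (j - 1)).countP
      (fun u => u == Letter.AB || u == Letter.AC || u == Letter.BC) : ℕ) : ℤ))

/-- The bracketed `q`-shifted parameter `p^{[j]}` (`j` is 1-based):
`A^{[j]} = A q^{#{h≥j : u_h∈{AB,AC,BC}}}`,
`B^{[j]} = B q^{#{h≥j : u_h∉{AD,BD}} + #{h≤j : u_h=AB}}`,
`C^{[j]} = C q^{#{h≥j : u_h∉{AD,CD}} + #{h≤j : u_h=AC}}`,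
`D^{[j]} = D q^{−#{h≤j : u_h∈{BC,BD,CD}}}`. -/
def bshift (w : List Letter) (j : ℕ) : Pt → K
  | .A => A * q ^ ((w.drop (j - 1)).countP
      (fun u => u == Letter.AB || u == Letter.AC || u == Letter.BC))
  | .B => B * q ^ ((w.drop (j - 1)).countP
        (fun u => !(u == Letter.AD || u == Letter.BD))
      + (w.take j).countP (fun u => u == Letter.AB))
  | .C => C * q ^ ((w.drop (j - 1)).countP
        (fun u => !(u == Letter.AD || u == Letter.CD))
      + (w.take j).countP (fun u => u == Letter.AC))
  | .D => D * q ^ (-(((w.take j).countP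
      (fun u => u == Letter.BC || u == Letter.BD || u == Letter.CD) : ℕ) : ℤ))

/-- `L_q(w) = I_q(A; [u_1^{(1)},v_1^{(1)}],…,[u_k^{(k)},v_k^{(k)}]; D)`: the sum over
chains `A ⊴ t_1 ⊴ ⋯ ⊴ t_k ⊴ D` (with `A = q^N D`, i.e. `t_j = A q^{-n_j}`,
`0 ≤ n_1 ≤ ⋯ ≤ n_k ≤ N`) of
`∏_j (t_j/(t_j − u_j^{(j)}) − t_j/(t_j − v_j^{(j)}))`. -/
noncomputable def LqW (N : ℕ) (w : List Letter) : K :=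
  ∑ n ∈ Finset.univ.filter (fun n : Fin w.length → Fin (N + 1) =>
      ∀ i j : Fin w.length, i ≤ j → n i ≤ n j),
    ∏ j : Fin w.length,
      (A * q ^ (-((n j : ℕ) : ℤ))
          / (A * q ^ (-((n j : ℕ) : ℤ)) - pshift A B C D q w ((j : ℕ) + 1) (w.get j).p1)
        - A * q ^ (-((n j : ℕ) : ℤ))
          / (A * q ^ (-((n j : ℕ) : ℤ)) - pshift A B C D q w ((j : ℕ) + 1) (w.get j).p2))

end

-- helpers
private lemma countP_add_countP (p q r : Letter → Bool)
    (h : ∀ u : Letter, (if p u then 1 else 0) + (if q u then 1 else 0)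
        = (if r u then 1 else 0)) :
    ∀ l : List Letter, l.countP p + l.countP q = l.countP r
  | [] => rfl
  | a :: l => by
      simp only [List.countP_cons]
      have h1 := countP_add_countP p q r h l
      have h2 := h a
      omega

private lemma countP_take_drop (p : Letter → Bool) (l : List Letter) (j : ℕ)
    (hj : j < l.length) :
    (l.take (j+1)).countP p + (l.drop j).countP p
      = l.countP p + (if p (l.get ⟨j, hj⟩) then 1 else 0) := by
  have h1 : l.drop j = l.get ⟨j, hj⟩ :: l.drop (j+1) := by
    simpa using List.drop_eq_getElem_cons hj
  -- ok
  have h2 : l.countP p = (l.take (j+1)).countP p + (l.drop (j+1)).countP p := by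
    conv_lhs => rw [← List.take_append_drop (j+1) l]
    rw [List.countP_append]
  rw [h1, List.countP_cons, h2]; omega

private lemma dual_p1 : ∀ L : Letter, (Letter.dual L).p1 = Pt.sigma L.p2 := by
  intro L; cases L <;> rfl
private lemma dual_p2 : ∀ L : Letter, (Letter.dual L).p2 = Pt.sigma L.p1 := by
  intro L; cases L <;> rfl

private lemma pshift_ne {K : Type*} [Field K] (A B C D q : K)
    (hA : A ≠ 0) (hB : B ≠ 0) (hC : C ≠ 0) (hD : D ≠ 0) (hq0 : q ≠ 0)
    (w : List Letter) (j : ℕ) (x : Pt) : pshift A B C D q w j x ≠ 0 := by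
  cases x <;>
    simp [pshift, hA, hB, hC, hD, pow_ne_zero, zpow_ne_zero, hq0]

private lemma bshift_ne {K : Type*} [Field K] (A B C D q : K)
    (hA : A ≠ 0) (hB : B ≠ 0) (hC : C ≠ 0) (hD : D ≠ 0) (hq0 : q ≠ 0)
    (w : List Letter) (j : ℕ) (x : Pt) : bshift A B C D q w j x ≠ 0 := by
  cases x <;>
    simp [bshift, hA, hB, hC, hD, pow_ne_zero, zpow_ne_zero, hq0]

private lemma flip_lemma {K : Type*} [Field K] (P t u v : K) (hP : P ≠ 0) (ht : t ≠ 0)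
    (hu : u ≠ 0) (hv : v ≠ 0) (htu : t ≠ u) (htv : t ≠ v) :
    P / t / (P / t - P / v) - P / t / (P / t - P / u) = t / (t - u) - t / (t - v) := by
  have hvt : v - t ≠ 0 := sub_ne_zero.mpr (Ne.symm htv)
  have hut : u - t ≠ 0 := sub_ne_zero.mpr (Ne.symm htu)
  have htu' : t - u ≠ 0 := sub_ne_zero.mpr htu
  have htv' : t - v ≠ 0 := sub_ne_zero.mpr htv
  have h1 : P / t - P / v = P * (v - t) / (t * v) := by field_simp
  have h2 : P / t - P / u = P * (u - t) / (t * u) := by field_simp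
  rw [h1, h2]
  field_simp
  ring

private lemma part1_lemma {K : Type*} [Field K] (A B C D q : K) (w : List Letter)
    (hq0 : q ≠ 0) (hB : B ≠ 0) (hC : C ≠ 0) (hD : D ≠ 0) (hA : A ≠ 0)
    (hm : A * D = B * C * q ^ (mval w))
    (j : ℕ) (hj : j < w.length) (p : Pt)
    (hBC : w.get ⟨j, hj⟩ ≠ Letter.AD ∨ p = Pt.A ∨ p = Pt.D) :
    A * D / bshift A B C D q w (j+1) (Pt.sigma p) = pshift A B C D q w (j+1) p := by
  have hqn : ∀ m : ℕ, q ^ m ≠ 0 := fun m => pow_ne_zero m hq0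
  cases p with
  | A =>
      simp only [Pt.sigma, bshift, pshift, Nat.add_sub_cancel]
      rw [zpow_neg, zpow_natCast]
      field_simp
  | D =>
      simp only [Pt.sigma, bshift, pshift, Nat.add_sub_cancel]
      rw [zpow_neg, zpow_natCast]
      field_simp
  | B =>
      have hne : w.get ⟨j, hj⟩ ≠ Letter.AD := by
        rcases hBC with h | h | h
        · exact h
        · simp at h
        · simp at h
      simp only [Pt.sigma, bshift, pshift, Nat.add_sub_cancel]
      have h1 := countP_add_countP (fun u => !(u == Letter.AD || u == Letter.CD))
        (fun u => u == Letter.CD) (fun u => !(u == Letter.AD))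
        (by intro u; cases u <;> rfl) (w.drop j)
      have h2 := countP_add_countP (fun u => u == Letter.AC)
        (fun u => !(u == Letter.AC || u == Letter.AD)) (fun u => !(u == Letter.AD))
        (by intro u; cases u <;> rfl) (w.take (j+1))
      have h3 := countP_take_drop (fun u => !(u == Letter.AD)) w j hj
      have h4 : (if (!(w.get ⟨j, hj⟩ == Letter.AD)) then 1 else 0) = 1 := by
        simp only [List.get_eq_getElem] at hne; simp [hne]
      have key : ((w.drop j).countP (fun u => !(u == Letter.AD || u == Letter.CD))
            + (w.take (j+1)).countP (fun u => u == Letter.AC))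
          + ((w.take (j+1)).countP (fun u => !(u == Letter.AC || u == Letter.AD))
            + (w.drop j).countP (fun u => u == Letter.CD)) = mval w := by
        unfold mval; omega
      rw [hm, ← key, pow_add]
      field_simp
  | C =>
      have hne : w.get ⟨j, hj⟩ ≠ Letter.AD := by
        rcases hBC with h | h | h
        · exact h
        · simp at h
        · simp at h
      simp only [Pt.sigma, bshift, pshift, Nat.add_sub_cancel]
      have h1 := countP_add_countP (fun u => !(u == Letter.AD || u == Letter.BD))
        (fun u => u == Letter.BD) (fun u => !(u == Letter.AD))
        (by intro u; cases u <;> rfl) (w.drop j)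
      have h2 := countP_add_countP (fun u => u == Letter.AB)
        (fun u => !(u == Letter.AB || u == Letter.AD)) (fun u => !(u == Letter.AD))
        (by intro u; cases u <;> rfl) (w.take (j+1))
      have h3 := countP_take_drop (fun u => !(u == Letter.AD)) w j hj
      have h4 : (if (!(w.get ⟨j, hj⟩ == Letter.AD)) then 1 else 0) = 1 := by
        simp only [List.get_eq_getElem] at hne; simp [hne]
      have key : ((w.drop j).countP (fun u => !(u == Letter.AD || u == Letter.BD))
            + (w.take (j+1)).countP (fun u => u == Letter.AB))
          + ((w.take (j+1)).countP (fun u => !(u == Letter.AB || u == Letter.AD))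
            + (w.drop j).countP (fun u => u == Letter.BD)) = mval w := by
        unfold mval; omega
      rw [hm, ← key, pow_add]
      field_simp

private lemma pshift_tau {K : Type*} [Field K] (A B C D q : K) (w : List Letter)
    (j : ℕ) (hj : j < w.length) (x : Pt) :
    pshift A B C D q (tauWord w) (w.length - j) x = bshift A B C D q w (j+1) x := by
  have hlen : (w.map Letter.dual).length = w.length := by simp
  have htake : (tauWord w).take (w.length - j) = ((w.drop j).map Letter.dual).reverse := by
    unfold tauWord
    rw [List.take_reverse, hlen, show w.length - (w.length - j) = j by omega,
      List.map_drop]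
  have hdrop : (tauWord w).drop (w.length - j - 1) = ((w.take (j+1)).map Letter.dual).reverse := by
    unfold tauWord
    rw [List.drop_reverse, hlen, show w.length - (w.length - j - 1) = j + 1 by omega,
      List.map_take]
  have e1 : ((fun u => u == Letter.BC || u == Letter.BD || u == Letter.CD) ∘ Letter.dual)
      = (fun u : Letter => u == Letter.AB || u == Letter.AC || u == Letter.BC) := by
    funext u; cases u <;> rfl
  have e2 : ((fun u => !(u == Letter.AC || u == Letter.AD)) ∘ Letter.dual)
      = (fun u : Letter => !(u == Letter.AD || u == Letter.BD)) := by
    funext u; cases u <;> rfl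
  have e3 : ((fun u => u == Letter.CD) ∘ Letter.dual)
      = (fun u : Letter => u == Letter.AB) := by
    funext u; cases u <;> rfl
  have e4 : ((fun u => !(u == Letter.AB || u == Letter.AD)) ∘ Letter.dual)
      = (fun u : Letter => !(u == Letter.AD || u == Letter.CD)) := by
    funext u; cases u <;> rfl
  have e5 : ((fun u => u == Letter.BD) ∘ Letter.dual)
      = (fun u : Letter => u == Letter.AC) := by
    funext u; cases u <;> rfl
  have e6 : ((fun u => u == Letter.AB || u == Letter.AC || u == Letter.BC) ∘ Letter.dual)
      = (fun u : Letter => u == Letter.BC || u == Letter.BD || u == Letter.CD) := by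
    funext u; cases u <;> rfl
  cases x <;>
    simp only [pshift, bshift, htake, hdrop, Nat.add_sub_cancel,
      List.countP_reverse, List.countP_map, e1, e2, e3, e4, e5, e6]

private lemma get_tau (w : List Letter) (j : ℕ) (hj : j < w.length)
    (h2 : w.length - 1 - j < (tauWord w).length) :
    (tauWord w).get ⟨w.length - 1 - j, h2⟩ = (w.get ⟨j, hj⟩).dual := by
  have hl : (tauWord w).length = w.length := by simp [tauWord]
  unfold tauWord
  simp only [List.get_eq_getElem, List.getElem_reverse, List.getElem_map, List.length_map]
  have h3 : w.length - 1 - (w.length - 1 - j) = j := by omega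
  simp [h3]

/-- **Theorem 4.2 of the paper** (the case `AD = BC q^{m(w)}`): in a field where
`A = q^N D` and `AD = BC q^{m(w)}`, the shifted parameters satisfy
`AD/τ(u_j)^{[j]} = u_j^{(j)}` and `AD/τ(v_j)^{[j]} = v_j^{(j)}` for all `j`, and
consequently `L_q(w) = L_q(τ(w))`. -/

theorem LqW_duality {K : Type*} [Field K] (A B C D q : K) (N : ℕ)
    (w : List Letter) (hadm : AdmissibleWord w)
    (hq0 : q ≠ 0) (hq : ∀ n : ℕ, 1 ≤ n → q ^ n ≠ 1)
    (hB : B ≠ 0) (hC : C ≠ 0) (hD : D ≠ 0)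
    (hAD : A = q ^ N * D)
    (hm : A * D = B * C * q ^ (mval w))
    (hden : ∀ j : Fin w.length, ∀ n : ℕ, n ≤ N →
      A * q ^ (-(n : ℤ)) ≠ pshift A B C D q w ((j : ℕ) + 1) (w.get j).p1 ∧
      A * q ^ (-(n : ℤ)) ≠ pshift A B C D q w ((j : ℕ) + 1) (w.get j).p2)
    (hden' : ∀ j : Fin (tauWord w).length, ∀ n : ℕ, n ≤ N →
      A * q ^ (-(n : ℤ)) ≠
        pshift A B C D q (tauWord w) ((j : ℕ) + 1) ((tauWord w).get j).p1 ∧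
      A * q ^ (-(n : ℤ)) ≠
        pshift A B C D q (tauWord w) ((j : ℕ) + 1) ((tauWord w).get j).p2) :
    (∀ j : Fin w.length,
      A * D / bshift A B C D q w ((j : ℕ) + 1) (Pt.sigma (w.get j).p1)
          = pshift A B C D q w ((j : ℕ) + 1) (w.get j).p1 ∧
      A * D / bshift A B C D q w ((j : ℕ) + 1) (Pt.sigma (w.get j).p2)
          = pshift A B C D q w ((j : ℕ) + 1) (w.get j).p2) ∧
    LqW A B C D q N w = LqW A B C D q N (tauWord w) := by

  have hA : A ≠ 0 := by rw [hAD]; exact mul_ne_zero (pow_ne_zero _ hq0) hD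
  have hADn : A * D ≠ 0 := mul_ne_zero hA hD
  have hp1AD : ∀ L : Letter, L ≠ Letter.AD ∨ L.p1 = Pt.A ∨ L.p1 = Pt.D := by
    intro L; cases L <;> simp [Letter.p1]
  have hp2AD : ∀ L : Letter, L ≠ Letter.AD ∨ L.p2 = Pt.A ∨ L.p2 = Pt.D := by
    intro L; cases L <;> simp [Letter.p2]
  have hmain : ∀ j : Fin w.length,
      A * D / bshift A B C D q w ((j : ℕ) + 1) (Pt.sigma (w.get j).p1)
          = pshift A B C D q w ((j : ℕ) + 1) (w.get j).p1 ∧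
      A * D / bshift A B C D q w ((j : ℕ) + 1) (Pt.sigma (w.get j).p2)
          = pshift A B C D q w ((j : ℕ) + 1) (w.get j).p2 := by
    intro j
    exact ⟨part1_lemma A B C D q w hq0 hB hC hD hA hm j j.isLt _ (hp1AD _),
      part1_lemma A B C D q w hq0 hB hC hD hA hm j j.isLt _ (hp2AD _)⟩
  refine ⟨hmain, ?_⟩
  have hk : (tauWord w).length = w.length := by simp [tauWord]
  unfold LqW
  refine Finset.sum_nbij'
    (i := fun (n : Fin w.length → Fin (N + 1)) (j' : Fin (tauWord w).length) =>
      (n ((Fin.cast hk j').rev)).rev)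
    (j := fun (n : Fin (tauWord w).length → Fin (N + 1)) (j0 : Fin w.length) =>
      (n ((Fin.cast hk.symm j0).rev)).rev)
    ?_ ?_ ?_ ?_ ?_
  · intro n hn
    simp only [Finset.mem_filter, Finset.mem_univ, true_and] at hn ⊢
    intro i j hij
    refine Fin.rev_le_rev.mpr (hn _ _ (Fin.rev_le_rev.mpr ?_))
    rw [Fin.le_def] at hij
    rw [Fin.le_def]
    simpa only [Fin.coe_cast] using hij
  · intro n hn
    simp only [Finset.mem_filter, Finset.mem_univ, true_and] at hn ⊢
    intro i j hij
    refine Fin.rev_le_rev.mpr (hn _ _ (Fin.rev_le_rev.mpr ?_))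
    rw [Fin.le_def] at hij
    rw [Fin.le_def]
    simpa only [Fin.coe_cast] using hij
  · intro n hn
    funext j0
    have hc : (Fin.cast hk ((Fin.cast hk.symm j0).rev)).rev = j0 := by
      apply Fin.ext
      have := j0.isLt
      simp only [Fin.coe_cast, Fin.val_rev]
      omega
    simp only [hc, Fin.rev_rev]
  · intro n hn
    funext j0
    have hc : (Fin.cast hk.symm ((Fin.cast hk j0).rev)).rev = j0 := by
      apply Fin.ext
      have := j0.isLt
      simp only [Fin.coe_cast, Fin.val_rev]
      omega
    simp only [hc, Fin.rev_rev]
  · intro n hn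
    rw [← Equiv.prod_comp (Fin.revPerm.trans (finCongr hk.symm))]
    refine Finset.prod_congr rfl fun j _ => ?_
    simp only [Equiv.trans_apply, Fin.revPerm_apply, finCongr_apply]
    have hjk : (j : ℕ) < w.length := j.isLt
    have hρ : ((Fin.cast hk.symm j.rev : Fin (tauWord w).length) : ℕ)
        = w.length - 1 - (j : ℕ) := by
      simp only [Fin.coe_cast, Fin.val_rev]
      omega
    have hcj : (Fin.cast hk (Fin.cast hk.symm j.rev)).rev = j := by
      apply Fin.ext
      simp only [Fin.coe_cast, Fin.val_rev]
      omega
    have hval : ((n ((Fin.cast hk (Fin.cast hk.symm j.rev)).rev)).rev : ℕ)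
        = N - (n j : ℕ) := by
      rw [hcj, Fin.val_rev]
      omega
    have hm' : (n j : ℕ) ≤ N := Nat.lt_succ_iff.mp (n j).isLt
    have hjj1 : ((Fin.cast hk.symm j.rev : Fin (tauWord w).length) : ℕ) + 1
        = w.length - (j : ℕ) := by omega
    have h2' : w.length - 1 - (j : ℕ) < (tauWord w).length := by omega
    have hget : (tauWord w).get (Fin.cast hk.symm j.rev) = (w.get j).dual := by
      have := get_tau w j j.isLt h2'
      rw [show (Fin.cast hk.symm j.rev : Fin (tauWord w).length)
          = ⟨w.length - 1 - (j : ℕ), h2'⟩ from Fin.ext hρ, this]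
    have hps1 : pshift A B C D q w ((j : ℕ) + 1) (w.get j).p1 ≠ 0 :=
      pshift_ne A B C D q hA hB hC hD hq0 w _ _
    have hps2 : pshift A B C D q w ((j : ℕ) + 1) (w.get j).p2 ≠ 0 :=
      pshift_ne A B C D q hA hB hC hD hq0 w _ _
    have hbs1 : bshift A B C D q w ((j : ℕ) + 1) (Pt.sigma (w.get j).p1) ≠ 0 :=
      bshift_ne A B C D q hA hB hC hD hq0 w _ _
    have hbs2 : bshift A B C D q w ((j : ℕ) + 1) (Pt.sigma (w.get j).p2) ≠ 0 :=
      bshift_ne A B C D q hA hB hC hD hq0 w _ _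
    have hp1eq : pshift A B C D q (tauWord w)
          (((Fin.cast hk.symm j.rev : Fin (tauWord w).length) : ℕ) + 1)
          ((tauWord w).get (Fin.cast hk.symm j.rev)).p1
        = A * D / pshift A B C D q w ((j : ℕ) + 1) (w.get j).p2 := by
      rw [hget, dual_p1, hjj1, pshift_tau A B C D q w j j.isLt,
        eq_div_iff hps2, (div_eq_iff hbs2).mp (hmain j).2]
      ring
    have hp2eq : pshift A B C D q (tauWord w)
          (((Fin.cast hk.symm j.rev : Fin (tauWord w).length) : ℕ) + 1)
          ((tauWord w).get (Fin.cast hk.symm j.rev)).p2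
        = A * D / pshift A B C D q w ((j : ℕ) + 1) (w.get j).p1 := by
      rw [hget, dual_p2, hjj1, pshift_tau A B C D q w j j.isLt,
        eq_div_iff hps1, (div_eq_iff hbs1).mp (hmain j).1]
      ring
    have htt : A * q ^ (-(((N - (n j : ℕ) : ℕ)) : ℤ))
        = A * D / (A * q ^ (-(((n j : ℕ)) : ℤ))) := by
      rw [show (-(((N - (n j : ℕ) : ℕ)) : ℤ)) = (((n j : ℕ)) : ℤ) - (N : ℤ) by omega,
        zpow_sub₀ hq0, zpow_neg, hAD]
      rw [zpow_natCast, zpow_natCast]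
      field_simp
    rw [hval, htt, hp1eq, hp2eq]
    have ht : A * q ^ (-(((n j : ℕ)) : ℤ)) ≠ 0 :=
      mul_ne_zero hA (zpow_ne_zero _ hq0)
    exact (flip_lemma (A * D) (A * q ^ (-(((n j : ℕ)) : ℤ)))
      (pshift A B C D q w ((j : ℕ) + 1) (w.get j).p1)
      (pshift A B C D q w ((j : ℕ) + 1) (w.get j).p2)
      hADn ht hps1 hps2 (hden j (n j) hm').1 (hden j (n j) hm').2).symm
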